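/- Let p be an odd prime, q = p^m, f a quadratic form on F_{q^{s₁}} of even rank R and sign ε_f, with associated linearized polynomial L_f satisfying f(x) = Tr_q^{q^{s₁}}(x·L_f(x)) and F(x,y) = Tr_q^{q^{s₁}}(x·L_f(y)). For z ∈ F_q* and b ∈ Im(L_f), with x_b satisfying L_f(x_b) = -b/2: ∑_{x ∈ F_{q^{s₁}}} ζ_p^{Tr_p^q(z·f(x) - Tr_q^{q^{s₁}}(z·b·x))} = ε_f · q^{s₁} · (p*)^{-mR/2} · ζ_p^{-Tr_p^q(z·f(x_b))}. -/

import Mathlib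

open Module

/-- `f` restricted to the subspace `H` (of dimension `r`) is a quadratic form of
rank `R` and sign `ε`. -/
def HasRankSignOn {F E : Type*} [Field F] [Fintype F] [DecidableEq F]
    [AddCommGroup E] [Module F E] (f : QuadraticForm F E) (H : Submodule F E)
    (r R : ℕ) (ε : ℤ) : Prop :=
  ∃ (hRr : R ≤ r) (b : Basis (Fin r) F H) (lam : Fin R → F),
    (∀ i, lam i ≠ 0) ∧
    (∀ x : H, f (x : E) = ∑ i : Fin R, lam i * (b.repr x (Fin.castLE hRr i)) ^ 2) ∧
    ε = quadraticChar F (∏ i, lam i)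

lemma addChar_map_sum {A M ι : Type*} [AddCommMonoid A] [CommMonoid M] (ψ : AddChar A M)
    (s : Finset ι) (g : ι → A) : ψ (∑ i ∈ s, g i) = ∏ i ∈ s, ψ (g i) := by
  classical
  induction s using Finset.induction_on with
  | empty => simp
  | insert a s ha ih => rw [Finset.sum_insert ha, Finset.prod_insert ha,
      ψ.map_add_eq_mul, ih]

lemma sum_psi_sq {F : Type*} [Field F] [Fintype F] [DecidableEq F] (hF : ringChar F ≠ 2)
    (ψ : AddChar F ℂ) (hψ : ψ.IsPrimitive) (a : F) (ha : a ≠ 0) :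
    ∑ t : F, ψ (a * t ^ 2)
      = ((quadraticChar F).ringHomComp (Int.castRingHom ℂ)) a
        * gaussSum ((quadraticChar F).ringHomComp (Int.castRingHom ℂ)) ψ := by
  classical
  set χ := (quadraticChar F).ringHomComp (Int.castRingHom ℂ) with hχ
  have step1 : ∑ t : F, ψ (a * t ^ 2)
      = ∑ y : F, ((quadraticChar F y : ℂ) + 1) * ψ (a * y) := by
    have hfib := Finset.sum_fiberwise_eq_sum_filter Finset.univ Finset.univ (fun t : F => t ^ 2)
      (fun t => ψ (a * t ^ 2))
    simp only [Finset.mem_univ, Finset.filter_true] at hfib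
    rw [← hfib]
    refine Finset.sum_congr rfl fun y _ => ?_
    have : ∀ t ∈ Finset.univ.filter (fun t : F => t ^ 2 = y), ψ (a * t ^ 2) = ψ (a * y) := by
      intro t ht
      rw [(Finset.mem_filter.mp ht).2]
    rw [Finset.sum_congr rfl this, Finset.sum_const, nsmul_eq_mul]
    congr 1
    have hcard := quadraticChar_card_sqrts hF y
    have : (Finset.univ.filter (fun t : F => t ^ 2 = y)).card
        = ({x : F | x ^ 2 = y}.toFinset).card := by
      congr 1
      ext t
      simp
    rw [this]
    exact_mod_cast congrArg (Int.cast : ℤ → ℂ) hcard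
  rw [step1]
  have expand : ∀ y : F, ((quadraticChar F y : ℂ) + 1) * ψ (a * y)
      = χ y * (ψ.mulShift a) y + (ψ.mulShift a) y := by
    intro y
    simp [AddChar.mulShift_apply, hχ, add_mul]
  rw [Finset.sum_congr rfl fun y _ => expand y, Finset.sum_add_distrib]
  have h0 : ∑ y : F, (ψ.mulShift a) y = 0 :=
    AddChar.sum_eq_zero_of_ne_one (hψ ha)
  rw [h0, add_zero]
  have hgs := gaussSum_mulShift χ ψ (Units.mk0 a ha)
  have hsq : χ a * χ a = 1 := by
    have h1 := quadraticChar_sq_one ha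
    have : ((quadraticChar F a : ℤ) : ℂ) * ((quadraticChar F a : ℤ) : ℂ) = 1 := by
      rw [← Int.cast_mul, ← pow_two, h1]; norm_num
    simpa [hχ] using this
  simp only [Units.val_mk0] at hgs
  calc ∑ y : F, χ y * (ψ.mulShift a) y = gaussSum χ (ψ.mulShift a) := rfl
    _ = (χ a * χ a) * gaussSum χ (ψ.mulShift a) := by rw [hsq, one_mul]
    _ = χ a * gaussSum χ ψ := by rw [mul_assoc, hgs]

lemma quadChar_neg_one_eq {p m : ℕ} (hpp : p.Prime) (hp : p ≠ 2) (F : Type*) [Field F]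
    [Fintype F] [DecidableEq F] (hring : ringChar F = p) (hcard : Fintype.card F = p ^ m) :
    quadraticChar F (-1) = ((-1 : ℤ) ^ ((p - 1) / 2)) ^ m := by
  have hF2 : ringChar F ≠ 2 := by rw [hring]; exact hp
  rw [quadraticChar_neg_one hF2, hcard]
  have hcast : ((p ^ m : ℕ) : ZMod 4) = ((p : ℕ) : ZMod 4) ^ m := by push_cast; ring
  have hodd : p % 2 = 1 := Nat.odd_iff.mp (hpp.odd_of_ne_two hp)
  have h4 : ZMod.χ₄ ((p : ℕ) : ZMod 4) = (-1 : ℤ) ^ ((p - 1) / 2) := by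
    rw [ZMod.χ₄_eq_neg_one_pow (n := p) hodd]
    congr 1
    omega
  calc ZMod.χ₄ ((p ^ m : ℕ) : ZMod 4) = ZMod.χ₄ (((p : ℕ) : ZMod 4) ^ m) := by rw [hcast]
    _ = (ZMod.χ₄ ((p : ℕ) : ZMod 4)) ^ m := by rw [map_pow]
    _ = ((-1 : ℤ) ^ ((p - 1) / 2)) ^ m := by rw [h4]

lemma numeric_aux {p m r nn : ℕ} (hp0 : (p : ℂ) ≠ 0) (hR : r + r ≤ nn) (c : ℂ)
    (hc2 : c ^ 2 = 1) :
    ((p : ℂ) ^ m) ^ (nn - (r + r)) * ((c ^ m) * (p : ℂ) ^ m) ^ r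
      = ((p : ℂ) ^ m) ^ nn * (c * (p : ℂ)) ^ (-((m * r : ℕ) : ℤ)) := by
  have hc0 : c ≠ 0 := fun h => by simp [h] at hc2
  have hcp0 : c * (p : ℂ) ≠ 0 := mul_ne_zero hc0 hp0
  have hpow : (c * (p : ℂ)) ^ (-((m * r : ℕ) : ℤ)) = ((c * (p : ℂ)) ^ (m * r : ℕ))⁻¹ := by
    rw [zpow_neg, zpow_natCast]
  rw [hpow, eq_comm, mul_inv_eq_iff_eq_mul₀ (pow_ne_zero _ hcp0), eq_comm]
  have e1 : ((c ^ m) * (p : ℂ) ^ m) ^ r = c ^ (m * r) * (p : ℂ) ^ (m * r) := by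
    rw [mul_pow, ← pow_mul, ← pow_mul]
  have e2 : (c * (p : ℂ)) ^ (m * r) = c ^ (m * r) * (p : ℂ) ^ (m * r) := mul_pow _ _ _
  rw [e1, e2, ← pow_mul (p : ℂ) m (nn - (r + r)), ← pow_mul (p : ℂ) m nn]
  have hexp : m * (nn - (r + r)) + (m * r + m * r) = m * nn := by
    conv_rhs => rw [← Nat.sub_add_cancel hR]
    ring
  have e3 : c ^ (m * r) * c ^ (m * r) = 1 := by
    rw [← pow_add, show m * r + m * r = 2 * (m * r) by ring, pow_mul, hc2, one_pow]
  have e4 : (p : ℂ) ^ (m * (nn - (r + r))) * ((p : ℂ) ^ (m * r) * (p : ℂ) ^ (m * r))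
      = (p : ℂ) ^ (m * nn) := by
    rw [← pow_add, ← pow_add, hexp]
  calc (p : ℂ) ^ (m * (nn - (r + r))) * (c ^ (m * r) * (p : ℂ) ^ (m * r))
        * (c ^ (m * r) * (p : ℂ) ^ (m * r))
      = (c ^ (m * r) * c ^ (m * r))
        * ((p : ℂ) ^ (m * (nn - (r + r))) * ((p : ℂ) ^ (m * r) * (p : ℂ) ^ (m * r))) := by ring
    _ = (p : ℂ) ^ (m * nn) := by rw [e3, e4, one_mul]

/-- For a quadratic form `f` of even rank `R` and sign `ε_f` on
`F_{q^{s₁}}` with linearized polynomial `L_f` (so `f(x) = Tr(x L_f(x))` and the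
polar form is `Tr(x L_f(y))`), `z ∈ F_q*`, `b ∈ Im(L_f)` and `L_f(x_b) = -b/2`:
`∑_x ζ_p^{Tr_p^q(z f(x) - Tr(z b x))} = ε_f q^{s₁} (p*)^{-mR/2} ζ_p^{-Tr_p^q(z f(x_b))}`. -/
theorem stmt_15 (p : ℕ) [Fact p.Prime] (hp : p ≠ 2) (m : ℕ) (F : Type*)
    [Field F] [Fintype F] [DecidableEq F] [Algebra (ZMod p) F]
    (hcard : Fintype.card F = p ^ m)
    (E₁ : Type*) [Field E₁] [Fintype E₁] [Algebra F E₁]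
    (f : QuadraticForm F E₁) (L : E₁ →ₗ[F] E₁)
    (hfL : ∀ x : E₁, f x = Algebra.trace F E₁ (x * L x))
    (hsym : ∀ x y : E₁, Algebra.trace F E₁ (x * L y) = Algebra.trace F E₁ (y * L x))
    (R : ℕ) (ε : ℤ) (hf : HasRankSignOn f ⊤ (finrank F E₁) R ε) (heven : Even R)
    (z : F) (hz : z ≠ 0) (b : E₁) (hb : b ∈ LinearMap.range L)
    (xb : E₁) (hxb : L xb = -(b / 2)) :
    ∑ x : E₁, Complex.exp (2 * Real.pi * Complex.I / p)
        ^ (Algebra.trace (ZMod p) F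
            (z * f x - Algebra.trace F E₁ (algebraMap F E₁ z * b * x))).val
      = (ε : ℂ) * (Fintype.card F : ℂ) ^ finrank F E₁
          * ((-1 : ℂ) ^ ((p - 1) / 2) * (p : ℂ)) ^ (-((m * R / 2 : ℕ) : ℤ))
          * Complex.exp (2 * Real.pi * Complex.I / p)
              ^ (-(((Algebra.trace (ZMod p) F (z * f xb)).val : ℤ))) := by
  classical
  obtain ⟨hRr, bB, lam, hlam0, hdiag, hε⟩ := hf
  have hp' : p.Prime := Fact.out
  haveI : NeZero p := ⟨hp'.ne_zero⟩
  haveI : CharP F p := charP_of_injective_ringHom (algebraMap (ZMod p) F).injective p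
  have hring : ringChar F = p := ringChar.eq F p
  have hF2 : ringChar F ≠ 2 := by rw [hring]; exact hp
  have h2F : (2 : F) ≠ 0 := Ring.two_ne_zero hF2
  set T := Algebra.trace F E₁ with hT
  set Trp := Algebra.trace (ZMod p) F with hTrp
  set ζ := Complex.exp (2 * Real.pi * Complex.I / p) with hζdef
  have hζ : ζ ^ p = 1 := by
    rw [hζdef, ← Complex.exp_nat_mul]
    have hpc : (p : ℂ) ≠ 0 := Nat.cast_ne_zero.mpr hp'.ne_zero
    have : (p : ℂ) * (2 * Real.pi * Complex.I / p) = 2 * Real.pi * Complex.I := by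
      field_simp
    rw [this, Complex.exp_two_pi_mul_I]
  set ψ₀ : AddChar (ZMod p) ℂ := AddChar.zmodChar p hζ with hψ₀
  set ψ : AddChar F ℂ := ψ₀.compAddMonoidHom Trp.toAddMonoidHom with hψdef
  have hψval : ∀ w : F, ψ w = ζ ^ (Trp w).val := by
    intro w
    rw [hψdef, AddChar.compAddMonoidHom_apply, hψ₀, AddChar.zmodChar_apply]
    rfl
  -- primitivity
  have hprim : IsPrimitiveRoot ζ p := Complex.isPrimitiveRoot_exp p hp'.ne_zero
  have hψne : ψ ≠ 1 := by
    obtain ⟨a, ha⟩ : ∃ a : F, Trp a ≠ 0 := by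
      by_contra hall
      push_neg at hall
      have h1 := (traceForm_nondegenerate (ZMod p) F).1 (1 : F)
      have : (1 : F) = 0 := by
        apply h1
        intro y
        simpa [Algebra.traceForm_apply] using hall y
      exact one_ne_zero this
    refine AddChar.ne_one_iff.mpr ⟨a, ?_⟩
    rw [hψval]
    have hlt : (Trp a).val < p := ZMod.val_lt _
    have hpos : 0 < (Trp a).val := Nat.pos_of_ne_zero fun h => ha ((ZMod.val_eq_zero _).mp h)
    exact hprim.pow_ne_one_of_pos_of_lt hpos.ne' hlt
  have hψprim : ψ.IsPrimitive := AddChar.IsPrimitive.of_ne_one hψne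
  -- algebraic manipulation of the exponent
  have hzb : ∀ w : E₁, T (algebraMap F E₁ z * b * w) = z * T (b * w) := by
    intro w
    have h1 : algebraMap F E₁ z * b * w = z • (b * w) := by
      rw [Algebra.smul_def]; ring
    rw [h1, map_smul, smul_eq_mul]
  have hhalf : ∀ w : E₁, T (w * L xb) = -(2⁻¹ : F) * T (w * b) := by
    intro w
    have h1 : w * L xb = (-(2⁻¹ : F)) • (w * b) := by
      rw [hxb, Algebra.smul_def, map_neg, map_inv₀, map_ofNat]
      ring
    rw [h1, map_smul, smul_eq_mul]
  have hfsub : ∀ x : E₁, f (x - xb) = f x + f xb + T (x * b) := by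
    intro x
    have expand : (x - xb) * L (x - xb) = x * L x - x * L xb - xb * L x + xb * L xb := by
      rw [map_sub]; ring
    rw [hfL, expand, map_add, map_sub, map_sub, hsym xb x, hhalf x, ← hfL, ← hfL]
    field_simp
    ring
  have hfxb : T (b * xb) = -(2 : F) * f xb := by
    have h1 := hhalf xb
    rw [← hfL] at h1
    rw [mul_comm b xb, h1]
    field_simp
  have key : ∀ x : E₁,
      z * f (x - xb) - T (algebraMap F E₁ z * b * (x - xb)) = z * f x + -(z * f xb) := by
    intro x
    rw [hfsub x, hzb, show b * (x - xb) = b * x - b * xb by ring, map_sub, hfxb,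
      show T (x * b) = T (b * x) by rw [mul_comm]]
    ring
  -- quadratic character over F with values in ℂ
  set χ := (quadraticChar F).ringHomComp (Int.castRingHom ℂ) with hχdef
  set G := gaussSum χ ψ with hGdef
  have hχne : χ ≠ 1 := by
    obtain ⟨a, ha⟩ := quadraticChar_exists_neg_one' hF2
    refine MulChar.ne_one_iff.mpr ⟨a, ?_⟩
    rw [hχdef]
    simp only [MulChar.ringHomComp_apply, ha, eq_intCast, Int.cast_neg, Int.cast_one]
    exact Ring.neg_one_ne_one_of_char_ne_two (by simp [ringChar.eq ℂ 0])
  have hχquad : χ.IsQuadratic := (quadraticChar_isQuadratic F).comp _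
  have hGsq : G ^ 2 = χ (-1) * (Fintype.card F : ℂ) := gaussSum_sq hχne hχquad hψprim
  obtain ⟨r, hr⟩ := heven
  have hkn : r + r ≤ finrank F E₁ := hr ▸ hRr
  -- the diagonalized basis on E₁ itself
  set bE : Basis (Fin (finrank F E₁)) F E₁ := bB.map (Submodule.topEquiv) with hbE
  have hdiag' : ∀ x : E₁, f x = ∑ i : Fin R, lam i * (bE.repr x (Fin.castLE hRr i)) ^ 2 := by
    intro x
    have h1 := hdiag ⟨x, trivial⟩
    rw [h1]
    refine Finset.sum_congr rfl fun i _ => ?_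
    rw [hbE, Basis.map_repr]
    rfl
  -- main Gauss sum computation
  have hmain : ∑ x : E₁, ψ (z * f x)
      = (ε : ℂ) * (Fintype.card F : ℂ) ^ finrank F E₁
          * ((-1 : ℂ) ^ ((p - 1) / 2) * (p : ℂ)) ^ (-((m * R / 2 : ℕ) : ℤ)) := by
    have hsum1 : ∑ x : E₁, ψ (z * f x)
        = ∑ c : Fin (finrank F E₁) → F,
            ψ (z * ∑ i : Fin R, lam i * (c (Fin.castLE hRr i)) ^ 2) := by
      refine Fintype.sum_equiv bE.equivFun.toEquiv _ _ fun x => ?_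
      rw [hdiag' x]
      simp [Basis.equivFun_apply]
    set k := finrank F E₁ - R with hk
    have hnk : finrank F E₁ = R + k := by omega
    let e1 : (Fin (finrank F E₁) → F) ≃ (Fin R → F) × (Fin k → F) :=
      (Equiv.arrowCongr (finCongr hnk) (Equiv.refl F)).trans
        ((Equiv.arrowCongr finSumFinEquiv (Equiv.refl F)).symm.trans
          (Equiv.sumArrowEquivProdArrow _ _ F))
    have he1 : ∀ (c : Fin (finrank F E₁) → F) (i : Fin R),
        (e1 c).1 i = c (Fin.castLE hRr i) := by
      intro c i
      show c ((finCongr hnk).symm (finSumFinEquiv (Sum.inl i))) = c (Fin.castLE hRr i)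
      exact congrArg c (Fin.ext (by simp))
    have hsum2 : ∑ c : Fin (finrank F E₁) → F,
            ψ (z * ∑ i : Fin R, lam i * (c (Fin.castLE hRr i)) ^ 2)
        = (Fintype.card F : ℂ) ^ k
            * ∑ a : Fin R → F, ψ (z * ∑ i : Fin R, lam i * (a i) ^ 2) := by
      rw [Fintype.sum_equiv e1 _
        (fun ac : (Fin R → F) × (Fin k → F) => ψ (z * ∑ i : Fin R, lam i * (ac.1 i) ^ 2))
        (fun c => by simp_rw [he1 c])]
      rw [Fintype.sum_prod_type]
      simp only [Finset.sum_const, Finset.card_univ, nsmul_eq_mul]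
      rw [← Finset.mul_sum]
      congr 1
      rw [Fintype.card_fun, Fintype.card_fin]
      push_cast
      ring
    have hsum3 : ∀ a : Fin R → F,
        ψ (z * ∑ i : Fin R, lam i * (a i) ^ 2) = ∏ i : Fin R, ψ ((z * lam i) * (a i) ^ 2) := by
      intro a
      rw [Finset.mul_sum]
      simp_rw [← mul_assoc]
      rw [addChar_map_sum]
    have hsum4 : ∑ a : Fin R → F, ∏ i : Fin R, ψ ((z * lam i) * (a i) ^ 2)
        = ∏ i : Fin R, ∑ t : F, ψ ((z * lam i) * t ^ 2) := by
      rw [Finset.prod_univ_sum, Fintype.piFinset_univ]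
    have hfac : ∀ i : Fin R, ∑ t : F, ψ ((z * lam i) * t ^ 2) = χ (z * lam i) * G := by
      intro i
      rw [hχdef, hGdef]
      exact sum_psi_sq hF2 ψ hψprim _ (mul_ne_zero hz (hlam0 i))
    have hprod : ∏ i : Fin R, (χ (z * lam i) * G) = (ε : ℂ) * G ^ R := by
      rw [Finset.prod_mul_distrib, Finset.prod_const, Finset.card_univ, Fintype.card_fin]
      congr 1
      rw [← map_prod]
      have h1 : ∏ i : Fin R, (z * lam i) = z ^ R * ∏ i : Fin R, lam i := by
        rw [Finset.prod_mul_distrib, Finset.prod_const, Finset.card_univ, Fintype.card_fin]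
      rw [h1, map_mul, map_pow]
      have hz2 : χ z ^ R = 1 := by
        have hzz : χ z * χ z = 1 := by
          have h2 := quadraticChar_sq_one hz
          have : ((quadraticChar F z : ℤ) : ℂ) * ((quadraticChar F z : ℤ) : ℂ) = 1 := by
            rw [← Int.cast_mul, ← pow_two, h2]; norm_num
          simpa [hχdef] using this
        rw [hr, pow_add, ← mul_pow, hzz, one_pow]
      rw [hz2, one_mul, hχdef]
      rw [MulChar.ringHomComp_apply, ← hε]
      norm_cast
    rw [hsum1, hsum2, Finset.sum_congr rfl fun a _ => hsum3 a, hsum4,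
      Finset.prod_congr rfl fun i _ => hfac i, hprod]
    have hGR : G ^ R = (χ (-1) * (Fintype.card F : ℂ)) ^ r := by
      rw [hr, show r + r = 2 * r by ring, pow_mul, hGsq]
    have hχm1 : χ (-1) = ((-1 : ℂ) ^ ((p - 1) / 2)) ^ m := by
      have h1 := quadChar_neg_one_eq hp' hp F hring hcard
      rw [hχdef, MulChar.ringHomComp_apply, h1]
      push_cast [map_pow]
      norm_num
    have hcardC : (Fintype.card F : ℂ) = (p : ℂ) ^ m := by
      rw [hcard]
      push_cast
      ring
    have hmr : m * R / 2 = m * r := by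
      rw [hr, show m * (r + r) = 2 * (m * r) by ring]
      exact Nat.mul_div_cancel_left _ (by norm_num)
    have hc2 : ((-1 : ℂ) ^ ((p - 1) / 2)) ^ 2 = 1 := by
      rw [← pow_mul, mul_comm, pow_mul]
      norm_num
    have hnum := numeric_aux (p := p) (m := m) (r := r) (nn := finrank F E₁)
      (Nat.cast_ne_zero.mpr hp'.ne_zero) hkn _ hc2
    rw [hGR, hχm1, hcardC, hmr, show k = finrank F E₁ - (r + r) by omega]
    calc ((p : ℂ) ^ m) ^ (finrank F E₁ - (r + r))
          * ((ε : ℂ) * ((((-1 : ℂ) ^ ((p - 1) / 2)) ^ m * ((p : ℂ) ^ m)) ^ r))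
        = (ε : ℂ) * (((p : ℂ) ^ m) ^ (finrank F E₁ - (r + r))
            * ((((-1 : ℂ) ^ ((p - 1) / 2)) ^ m * ((p : ℂ) ^ m)) ^ r)) := by ring
      _ = (ε : ℂ) * (((p : ℂ) ^ m) ^ finrank F E₁
            * ((-1 : ℂ) ^ ((p - 1) / 2) * (p : ℂ)) ^ (-((m * r : ℕ) : ℤ))) := by rw [hnum]
      _ = (ε : ℂ) * ((p : ℂ) ^ m) ^ finrank F E₁
            * ((-1 : ℂ) ^ ((p - 1) / 2) * (p : ℂ)) ^ (-((m * r : ℕ) : ℤ)) := by ring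
  -- the constant factor
  have hlast : ψ (-(z * f xb)) = ζ ^ (-(((Trp (z * f xb)).val : ℤ))) := by
    rw [hψval, map_neg]
    set u := Trp (z * f xb) with hu
    have hmulone : ζ ^ ((-u).val) * ζ ^ u.val = 1 := by
      rw [← pow_add]
      by_cases h0 : u = 0
      · simp [h0]
      · rw [ZMod.neg_val, if_neg h0, Nat.sub_add_cancel (le_of_lt (ZMod.val_lt u)), hζ]
    rw [eq_inv_of_mul_eq_one_left hmulone, zpow_neg, zpow_natCast]
  calc ∑ x : E₁, ζ ^ (Trp (z * f x - T (algebraMap F E₁ z * b * x))).val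
      = ∑ x : E₁, ψ (z * f x - T (algebraMap F E₁ z * b * x)) :=
        Finset.sum_congr rfl fun x _ => (hψval _).symm
    _ = ∑ x : E₁, ψ (z * f (x - xb) - T (algebraMap F E₁ z * b * (x - xb))) :=
        (Fintype.sum_equiv (Equiv.subRight xb)
          (fun x => ψ (z * f (x - xb) - T (algebraMap F E₁ z * b * (x - xb))))
          (fun x => ψ (z * f x - T (algebraMap F E₁ z * b * x))) fun x => rfl).symm
    _ = ∑ x : E₁, ψ (z * f x) * ψ (-(z * f xb)) :=
        Finset.sum_congr rfl fun x _ => by rw [key x, AddChar.map_add_eq_mul]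
    _ = (∑ x : E₁, ψ (z * f x)) * ψ (-(z * f xb)) := by rw [← Finset.sum_mul]
    _ = (ε : ℂ) * (Fintype.card F : ℂ) ^ finrank F E₁
          * ((-1 : ℂ) ^ ((p - 1) / 2) * (p : ℂ)) ^ (-((m * R / 2 : ℕ) : ℤ))
          * ζ ^ (-(((Trp (z * f xb)).val : ℤ))) := by rw [hmain, hlast]
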